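/- Let X be an alphabet with n ≥ 2 letters, let g: X* → X* be a growing morphism, and let w ∈ X*. Then Pref₂({g^i(w) : i ≥ 0}) = Pref₂({g^i(w) : i = 0, 1, …, 3n−2}). -/

import Mathlib

open Filter Set

variable {X : Type*}

/-- Apply the morphism with letter images `g` to a word. -/
def applyM (g : X → List X) (w : List X) : List X := w.flatMap g

/-- `iterM g k w` is `g^k(w)`. -/
def iterM (g : X → List X) (k : ℕ) (w : List X) : List X := (applyM g)^[k] w

/-- The letter map of the composition `g ∘ h` (first `h`, then `g`). -/
def compM (g h : X → List X) : X → List X := fun a => applyM g (h a)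

/-- The letter map of the power `g^k`. -/
def powM (g : X → List X) (k : ℕ) : X → List X := fun a => iterM g k [a]

/-- A morphism is primitive if some power maps every letter to a word containing every letter. -/
def Primitive (g : X → List X) : Prop := ∃ k : ℕ, 0 < k ∧ ∀ a b : X, a ∈ iterM g k [b]

/-- `Mg g` is the maximal length of the image of a letter. -/
def Mg [Fintype X] (g : X → List X) : ℕ := Finset.univ.sup fun x => (g x).length

/-- A morphism is growing if the lengths of iterated images of every letter tend to infinity. -/
def Growing (g : X → List X) : Prop :=
  ∀ x : X, Tendsto (fun i => (iterM g i [x]).length) atTop atTop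

/-- `w` is a (finite) prefix of the infinite word `s`. -/
def IsPrefI (w : List X) (s : ℕ → X) : Prop := ∀ i (h : i < w.length), w[i]'h = s i

/-- `v` is a factor of the infinite word `s`. -/
def IsFactorI (v : List X) (s : ℕ → X) : Prop :=
  ∃ j : ℕ, ∀ i (h : i < v.length), v[i]'h = s (j + i)

/-- `g^ω(x)` exists. -/
def OmegaExists (g : X → List X) (x : X) : Prop :=
  [x] <+: g x ∧ Tendsto (fun i => (iterM g i [x]).length) atTop atTop

/-- `s = g^ω(x)`. -/
def IsOmega (g : X → List X) (x : X) (s : ℕ → X) : Prop :=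
  OmegaExists g x ∧ ∀ i : ℕ, IsPrefI (iterM g i [x]) s

/-- `s = u^ω` for the nonempty word `u`. -/
def IsPeriodicWord (s : ℕ → X) (u : List X) : Prop :=
  u ≠ [] ∧ ∀ (i : ℕ) (h : i % u.length < u.length), s i = u[i % u.length]'h

/-- A morphism is looping. -/
def Looping (g : X → List X) : Prop :=
  ∃ k : ℕ, 0 < k ∧ ∃ x : X, ∃ u : List X, ∃ s : ℕ → X,
    IsOmega (powM g k) x s ∧ IsPeriodicWord s u

/-- A morphism is loop-free if it is not looping. -/
def LoopFree (g : X → List X) : Prop := ¬ Looping g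

/-- `p` is a period of `u`. -/
def HasPeriod (u : List X) (p : ℕ) : Prop :=
  0 < p ∧ ∀ i : ℕ, i + p < u.length → u[i + p]? = u[i]?

/-- The smallest period of `u`. -/
noncomputable def PER (u : List X) : ℕ := sInf {p | HasPeriod u p}

/-- A primitive word: nonempty and not a proper power of a shorter word. -/
def PrimitiveWord (u : List X) : Prop :=
  u ≠ [] ∧ ¬∃ (v : List X) (j : ℕ), 2 ≤ j ∧ v.length < u.length ∧
    u = (List.replicate j v).flatten

/-- `COMP g h` : the set of words whose images under `g` and `h` are prefix-comparable. -/
def COMP (g h : X → List X) : Set (List X) :=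
  {w | ∃ u₁ u₂ : List X, applyM g w ++ u₁ = applyM h w ++ u₂}

/-- `BAL g h`. -/
noncomputable def BAL (g h : X → List X) : ℕ∞ :=
  ⨆ (x : X) (k : ℕ),
    ((((applyM g (iterM g k [x])).length : ℤ) -
      ((applyM h (iterM g k [x])).length : ℤ)).natAbs : ℕ∞)

/-- The set of factors of length `q` of the word `w`. -/
def Fq (q : ℕ) (w : List X) : Set (List X) := {v | v.length = q ∧ v <:+: w}

/-- The set of factors of length `q` of words of `L`. -/
def FqL (q : ℕ) (L : Set (List X)) : Set (List X) := ⋃ w ∈ L, Fq q w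

/-- `A n = ⌊9 n³ √(n log n)⌋`. -/
noncomputable def Abound (n : ℕ) : ℕ := ⌊9 * (n : ℝ)^3 * Real.sqrt (n * Real.log n)⌋₊

section PrefTwoAux

variable {Y : Type*}

lemma applyM_nil' (g : Y → List Y) : applyM g [] = [] := rfl

lemma applyM_cons' (g : Y → List Y) (x : Y) (u : List Y) :
    applyM g (x :: u) = g x ++ applyM g u := rfl

lemma applyM_append' (g : Y → List Y) (u v : List Y) :
    applyM g (u ++ v) = applyM g u ++ applyM g v := List.flatMap_append ..

lemma iterM_succ'' (g : Y → List Y) (i : ℕ) (w : List Y) :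
    iterM g (i + 1) w = applyM g (iterM g i w) :=
  Function.iterate_succ_apply' (applyM g) i w

lemma iterM_nil' (g : Y → List Y) (i : ℕ) : iterM g i [] = [] :=
  Function.iterate_fixed rfl i

lemma growing_ne_nil {g : Y → List Y} (hg : Growing g) (x : Y) : g x ≠ [] := by
  intro hx
  have h1 : ∀ i, iterM g (i + 1) [x] = [] := by
    intro i
    have h2 : iterM g (i + 1) [x] = iterM g i (applyM g [x]) :=
      Function.iterate_succ_apply (applyM g) i [x]
    have h3 : applyM g [x] = [] := by simp [applyM, hx]
    rw [h2, h3, iterM_nil']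
  obtain ⟨N, hN⟩ := (Filter.eventually_atTop).1 ((hg x).eventually_ge_atTop 1)
  have := hN (N + 1) (by omega)
  rw [h1 N] at this
  simp at this

lemma length_le_applyM {g : Y → List Y} (hne : ∀ x, g x ≠ []) (u : List Y) :
    u.length ≤ (applyM g u).length := by
  induction u with
  | nil => simp
  | cons x t ih =>
    have hx : 1 ≤ (g x).length := List.length_pos_iff.2 (hne x)
    rw [applyM_cons']
    simp only [List.length_cons, List.length_append]
    omega

lemma iterM_ne_nil {g : Y → List Y} (hne : ∀ x, g x ≠ []) {w : List Y} (hw : w ≠ [])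
    (i : ℕ) : iterM g i w ≠ [] := by
  induction i with
  | zero => exact hw
  | succ i ih =>
    have h1 : 0 < (iterM g i w).length := List.length_pos_iff.2 ih
    have h2 := length_le_applyM hne (iterM g i w)
    rw [iterM_succ'']
    exact List.ne_nil_of_length_pos (by omega)

lemma take2_applyM {g : Y → List Y} (hne : ∀ x, g x ≠ []) (u : List Y) :
    (applyM g u).take 2 = (applyM g (u.take 2)).take 2 := by
  rcases le_or_gt u.length 2 with h | h
  · rw [List.take_of_length_le h]
  · have hsplit : applyM g u = applyM g (u.take 2) ++ applyM g (u.drop 2) := by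
      rw [← applyM_append', List.take_append_drop]
    have hlen : 2 ≤ (applyM g (u.take 2)).length := by
      have := length_le_applyM hne (u.take 2)
      rw [List.length_take] at this
      omega
    rw [hsplit, List.take_append_of_le_length hlen]

lemma pref_two_key {Y : Type*} [Fintype Y] (n : ℕ) (hn : n = Fintype.card Y) (hn2 : 2 ≤ n)
    (g : Y → List Y) (hg : Growing g) (w : List Y) (i : ℕ) :
    ∃ j, j ≤ 3 * n - 2 ∧ (iterM g i w).take 2 = (iterM g j w).take 2 := by
  have hne : ∀ x, g x ≠ [] := growing_ne_nil hg
  rcases eq_or_ne w [] with rfl | hw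
  · exact ⟨0, by omega, by rw [iterM_nil', iterM_nil']⟩
  have hYpos : 0 < Fintype.card Y := by omega
  haveI : Inhabited Y := Classical.inhabited_of_nonempty (Fintype.card_pos_iff.mp hYpos)
  set s : ℕ → List Y := fun k => (iterM g k w).take 2 with hs
  set a : ℕ → Y := fun k => (iterM g k w).headI with haa
  have hdec : ∀ k, ∃ r, iterM g (k + 1) w = g (a k) ++ r := by
    intro k
    obtain ⟨x, t, hxt⟩ := List.exists_cons_of_ne_nil (iterM_ne_nil hne hw k)
    refine ⟨applyM g t, ?_⟩
    rw [iterM_succ'', hxt, applyM_cons']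
    congr 2
    simp [haa, hxt]
  have ha_succ : ∀ k, a (k + 1) = (g (a k)).headI := by
    intro k
    obtain ⟨r, hr⟩ := hdec k
    obtain ⟨y, t, hy⟩ := List.exists_cons_of_ne_nil (hne (a k))
    show (iterM g (k + 1) w).headI = _
    rw [hr, hy]
    rfl
  have hpigeon : ∃ t p : ℕ, 0 < p ∧ t + p ≤ n ∧ a (t + p) = a t := by
    have hcard : Fintype.card Y < Fintype.card (Fin (n + 1)) := by simp [← hn]
    obtain ⟨j, k, hjk, heq⟩ := Fintype.exists_ne_map_eq_of_card_lt
      (fun m : Fin (n + 1) => a m) hcard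
    rcases lt_or_gt_of_ne hjk with h | h
    · have hjk' : (j : ℕ) < (k : ℕ) := h
      refine ⟨(j : ℕ), (k : ℕ) - (j : ℕ), by omega, by have := k.isLt; omega, ?_⟩
      rw [show (j : ℕ) + ((k : ℕ) - (j : ℕ)) = (k : ℕ) by omega]
      exact heq.symm
    · have hjk' : (k : ℕ) < (j : ℕ) := h
      refine ⟨(k : ℕ), (j : ℕ) - (k : ℕ), by omega, by have := j.isLt; omega, ?_⟩
      rw [show (k : ℕ) + ((j : ℕ) - (k : ℕ)) = (j : ℕ) by omega]
      exact heq
  obtain ⟨t, p, hp, htp, hcyc⟩ := hpigeon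
  have haper' : ∀ m, a (t + m + p) = a (t + m) := by
    intro m
    induction m with
    | zero => simpa using hcyc
    | succ m ih =>
      have e1 : t + (m + 1) + p = (t + m + p) + 1 := by omega
      have e2 : t + (m + 1) = (t + m) + 1 := by omega
      rw [e1, e2, ha_succ, ha_succ, ih]
  have haper : ∀ k, t ≤ k → a (k + p) = a k := by
    intro k hk
    obtain ⟨m, rfl⟩ := Nat.exists_eq_add_of_le hk
    exact haper' m
  have hred : ∀ k, t ≤ k → ∃ j, t ≤ j ∧ j < t + p ∧ a j = a k := by
    intro k
    induction k using Nat.strong_induction_on with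
    | _ k ih =>
      intro hk
      rcases lt_or_ge k (t + p) with h | h
      · exact ⟨k, hk, h, rfl⟩
      · obtain ⟨j, h1, h2, h3⟩ := ih (k - p) (by omega) (by omega)
        refine ⟨j, h1, h2, ?_⟩
        rw [h3]
        have h4 := haper (k - p) (by omega)
        rw [show k - p + p = k by omega] at h4
        exact h4.symm
  have hbig : ∃ i₀, t ≤ i₀ ∧ i₀ < t + p ∧ 2 ≤ (g (a i₀)).length := by
    by_contra hcon
    push_neg at hcon
    have h1 : ∀ k, t ≤ k → (g (a k)).length = 1 := by
      intro k hk
      obtain ⟨j, hj1, hj2, hj3⟩ := hred k hk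
      have h2 := hcon j hj1 hj2
      rw [hj3] at h2
      have h3 : 1 ≤ (g (a k)).length := List.length_pos_iff.2 (hne (a k))
      omega
    have hsingle : ∀ k, t ≤ k → g (a k) = [a (k + 1)] := by
      intro k hk
      obtain ⟨y, u, hy⟩ := List.exists_cons_of_ne_nil (hne (a k))
      have hu : u = [] := by
        have := h1 k hk
        rw [hy] at this
        simpa using this
      rw [hy, hu, ha_succ k, hy, hu]
      simp
    have hiter : ∀ m, iterM g m [a t] = [a (t + m)] := by
      intro m
      induction m with
      | zero => simp [iterM]
      | succ m ih =>
        rw [iterM_succ'', ih, applyM_cons']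
        simp only [applyM_nil', List.append_nil]
        exact hsingle (t + m) (by omega)
    obtain ⟨N, hN⟩ := (Filter.eventually_atTop).1 ((hg (a t)).eventually_ge_atTop 2)
    have h2 := hN N le_rfl
    rw [hiter N] at h2
    simp at h2
  obtain ⟨i₀, hi₀1, hi₀2, hc2⟩ := hbig
  have hP : ∀ k, a k = a i₀ → s (k + 1) = (g (a i₀)).take 2 := by
    intro k hk
    obtain ⟨r, hr⟩ := hdec k
    show (iterM g (k + 1) w).take 2 = _
    rw [hr, hk, List.take_append_of_le_length hc2]
  have sT : ∀ k, s (k + 1) = (applyM g (s k)).take 2 := by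
    intro k
    show (iterM g (k + 1) w).take 2 = _
    rw [iterM_succ'', take2_applyM hne]
  have hbase : s (i₀ + 1 + p) = s (i₀ + 1) := by
    have h1 := hP i₀ rfl
    have h2 : a (i₀ + p) = a i₀ := haper i₀ hi₀1
    have h3 := hP (i₀ + p) h2
    rw [show i₀ + 1 + p = i₀ + p + 1 by omega, h3, h1]
  have hper : ∀ m, s (i₀ + 1 + m + p) = s (i₀ + 1 + m) := by
    intro m
    induction m with
    | zero => simpa using hbase
    | succ m ih =>
      have e1 : i₀ + 1 + (m + 1) + p = (i₀ + 1 + m + p) + 1 := by omega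
      rw [e1, sT, ih, ← sT]
      rfl
  have hfin : ∀ k, ∃ j, j ≤ i₀ + p ∧ s j = s k := by
    intro k
    induction k using Nat.strong_induction_on with
    | _ k ih =>
      rcases le_or_gt k (i₀ + p) with h | h
      · exact ⟨k, h, rfl⟩
      · obtain ⟨j, hj1, hj2⟩ := ih (k - p) (by omega)
        refine ⟨j, hj1, ?_⟩
        rw [hj2]
        have h4 := hper (k - p - (i₀ + 1))
        rw [show i₀ + 1 + (k - p - (i₀ + 1)) + p = k by omega,
            show i₀ + 1 + (k - p - (i₀ + 1)) = k - p by omega] at h4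
        exact h4.symm
  obtain ⟨j, hj1, hj2⟩ := hfin i
  exact ⟨j, by omega, hj2.symm⟩

end PrefTwoAux

/-- For a growing morphism `g` on an alphabet with `n ≥ 2` letters
and any word `w`, `Pref₂({g^i(w) : i ≥ 0}) = Pref₂({g^i(w) : 0 ≤ i ≤ 3n-2})`. -/
theorem pref_two_iterates_eq {X : Type*} [Fintype X]
    (n : ℕ) (hn : n = Fintype.card X) (hn2 : 2 ≤ n)
    (g : X → List X) (hg : Growing g) (w : List X) :
    {v | ∃ i : ℕ, v = (iterM g i w).take 2} =
      {v | ∃ i : ℕ, i ≤ 3 * n - 2 ∧ v = (iterM g i w).take 2} := by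
  ext v
  simp only [Set.mem_setOf_eq]
  constructor
  · rintro ⟨i, rfl⟩
    obtain ⟨j, hj, hji⟩ := pref_two_key n hn hn2 g hg w i
    exact ⟨j, hj, hji⟩
  · rintro ⟨i, -, rfl⟩
    exact ⟨i, rfl⟩
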